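/- Let Q be a self-adjoint continuous linear operator on E and c ∈ E, and define f : E → [0,∞) by f(x) = max(1 − ⟨x,Qx⟩/2 − ⟨c,x⟩, 0). Then for every y ∈ E: if (⟨c,y⟩+1)² + 2·⟨y,Qy⟩ ≥ 0, then f^Γ(y) = max((⟨c,y⟩ + 1 + √((⟨c,y⟩+1)² + 2·⟨y,Qy⟩))/2, 0); and if (⟨c,y⟩+1)² + 2·⟨y,Qy⟩ < 0, then f^Γ(y) = 0. -/

import Mathlib

open scoped ENNReal RealInnerProductSpace Pointwise
open Metric Set

variable {E : Type*} [NormedAddCommGroup E] [InnerProductSpace ℝ E] [FiniteDimensional ℝ E]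

/-- The hypograph of `f`, viewed inside `E × (0,∞)`. -/
def hypo (f : E → ℝ≥0∞) : Set (E × ℝ) := {p | 0 < p.2 ∧ ENNReal.ofReal p.2 ≤ f p.1}

/-- The epigraph of `f`, viewed inside `E × (0,∞)`. -/
def epigraph (f : E → ℝ≥0∞) : Set (E × ℝ) := {p | 0 < p.2 ∧ f p.1 ≤ ENNReal.ofReal p.2}

/-- `f` is upper semicontinuous: its hypograph is closed in `E × (0,∞)`. -/
def IsUSC (f : E → ℝ≥0∞) : Prop := closure (hypo f) ∩ {p : E × ℝ | 0 < p.2} ⊆ hypo f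

/-- The perspective function `(y, v) ↦ v ⬝ f(y/v)`. -/
noncomputable def persp (f : E → ℝ≥0∞) (p : E × ℝ) : ℝ≥0∞ :=
  ENNReal.ofReal p.2 * f (p.2⁻¹ • p.1)

/-- `f` is upper radial: its perspective function is u.s.c. on `E × (0,∞)` and
nondecreasing in `v`. -/
def UpperRadial (f : E → ℝ≥0∞) : Prop :=
  UpperSemicontinuousOn (persp f) {p : E × ℝ | 0 < p.2} ∧
  ∀ (y : E) (v v' : ℝ), 0 < v → v ≤ v' → persp f (y, v) ≤ persp f (y, v')

/-- `f` is strictly upper radial. -/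
def StrictlyUpperRadial (f : E → ℝ≥0∞) : Prop :=
  UpperRadial f ∧ ∀ (y : E) (v v' : ℝ), 0 < v → v < v' →
    0 < persp f (y, v) → persp f (y, v) < ⊤ → persp f (y, v) < persp f (y, v')

/-- The upper radial transformation `f^Γ(y) = sup{v > 0 : v ⬝ f(y/v) ≤ 1}` (`sup ∅ = 0`). -/
noncomputable def radial (f : E → ℝ≥0∞) (y : E) : ℝ≥0∞ :=
  ⨆ (v : ℝ) (_ : 0 < v ∧ persp f (y, v) ≤ 1), ENNReal.ofReal v

/-- The Euclidean norm on `E × ℝ`. -/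
noncomputable def pnorm (p : E × ℝ) : ℝ := Real.sqrt (‖p.1‖ ^ 2 + p.2 ^ 2)

/-- `w` is a proximal normal to `S` at `z ∈ S`: `dist(z + ε w, S) = ε ‖w‖` for some `ε > 0`,
with the Euclidean distance on `E × ℝ`. -/
def IsProxNormal (S : Set (E × ℝ)) (z w : E × ℝ) : Prop :=
  z ∈ S ∧ ∃ ε : ℝ, 0 < ε ∧ sInf ((fun q => pnorm (z + ε • w - q)) '' S) = ε * pnorm w

/-- `R(f)`: the infimum of `‖x'‖` over points on hyperplanes induced by proximal normals of
the hypograph (`inf ∅ = ∞`). -/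
noncomputable def Rrad (f : E → ℝ≥0∞) : ℝ≥0∞ :=
  ⨅ (x' : E) (_ : ∃ p w, IsProxNormal (hypo f) p w ∧
    ⟪w.1, x'⟫ = ⟪w.1, p.1⟫ + w.2 * p.2), ENNReal.ofReal ‖x'‖

/-- `D(f) = sup{‖x‖ : 0 < f(x) < ∞}`. -/
noncomputable def Drad (f : E → ℝ≥0∞) : ℝ≥0∞ :=
  ⨆ (x : E) (_ : 0 < f x ∧ f x < ⊤), ENNReal.ofReal ‖x‖

/-- The proximal subdifferential of `f` at `x` (empty unless `f x ∈ (0,∞)`). -/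
def subdiffP (f : E → ℝ≥0∞) (x : E) : Set E :=
  {ζ | 0 < f x ∧ f x < ⊤ ∧ IsProxNormal (epigraph f) (x, (f x).toReal) (ζ, -1)}

/-- The proximal supdifferential of `f` at `x` (empty unless `f x ∈ (0,∞)`). -/
def supdiffP (f : E → ℝ≥0∞) (x : E) : Set E :=
  {ζ | 0 < f x ∧ f x < ⊤ ∧ IsProxNormal (hypo f) (x, (f x).toReal) (-ζ, 1)}

/-- `ζ` is a subgradient of `g` at `y`: `g(z) ≥ g(y) + ⟨ζ, z - y⟩` for all `z`. -/
def IsSubgrad (g : E → ℝ≥0∞) (y ζ : E) : Prop :=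
  ∀ z : E, (g y : EReal) + ((⟪ζ, z - y⟫ : ℝ) : EReal) ≤ (g z : EReal)

/-- The Minkowski gauge `γ_S(y) = inf{λ > 0 : y ∈ λ S}` (`inf ∅ = ∞`). -/
noncomputable def gaugeE (S : Set E) (y : E) : ℝ≥0∞ :=
  ⨅ (lam : ℝ) (_ : 0 < lam ∧ y ∈ lam • S), ENNReal.ofReal lam

/-- The indicator `ι_S` taking value `∞` on `S` and `0` elsewhere. -/
noncomputable def indic (S : Set E) (x : E) : ℝ≥0∞ := S.indicator (fun _ => (⊤ : ℝ≥0∞)) x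

/-- closed form of the radial dual of a (possibly nonconcave)
quadratic objective. -/
theorem statement15 (Q : E →L[ℝ] E) (hQ : ∀ u w : E, ⟪Q u, w⟫ = ⟪u, Q w⟫) (c : E)
    (f : E → ℝ≥0∞)
    (hf : ∀ x : E, f x = ENNReal.ofReal (max (1 - ⟪x, Q x⟫ / 2 - ⟪c, x⟫) 0)) :
    ∀ y : E,
      (0 ≤ (⟪c, y⟫ + 1) ^ 2 + 2 * ⟪y, Q y⟫ →
        radial f y = ENNReal.ofReal
          (max ((⟪c, y⟫ + 1 + Real.sqrt ((⟪c, y⟫ + 1) ^ 2 + 2 * ⟪y, Q y⟫)) / 2) 0)) ∧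
      ((⟪c, y⟫ + 1) ^ 2 + 2 * ⟪y, Q y⟫ < 0 → radial f y = 0) := by
  intro y
  set a : ℝ := ⟪c, y⟫ with ha
  set b : ℝ := ⟪y, Q y⟫ with hb
  have key : ∀ v : ℝ, 0 < v → (persp f (y, v) ≤ 1 ↔ v ^ 2 - (a + 1) * v - b / 2 ≤ 0) := by
    intro v hv
    have h1 : (⟪v⁻¹ • y, Q (v⁻¹ • y)⟫ : ℝ) = v⁻¹ * (v⁻¹ * b) := by
      rw [map_smul, real_inner_smul_left, real_inner_smul_right]
    have h2 : (⟪c, v⁻¹ • y⟫ : ℝ) = v⁻¹ * a := by rw [real_inner_smul_right]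
    have hpersp : persp f (y, v) =
        ENNReal.ofReal (v * max (1 - v⁻¹ * (v⁻¹ * b) / 2 - v⁻¹ * a) 0) := by
      rw [persp, hf]
      simp only [h1, h2]
      rw [← ENNReal.ofReal_mul hv.le]
    rw [hpersp]
    rw [ENNReal.ofReal_le_one]
    have hmm : v * max (1 - v⁻¹ * (v⁻¹ * b) / 2 - v⁻¹ * a) 0
        = max (v - b / (2 * v) - a) 0 := by
      rw [mul_max_of_nonneg _ _ hv.le, mul_zero]
      congr 1
      field_simp
    rw [hmm, max_le_iff]
    constructor
    · rintro ⟨h, -⟩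
      have hmul := mul_le_mul_of_nonneg_right h hv.le
      have hbv : b / (2 * v) * v = b / 2 := by field_simp
      nlinarith
    · intro h
      refine ⟨?_, zero_le_one⟩
      have hbv : b / (2 * v) * v = b / 2 := by field_simp
      rw [← sub_nonneg]
      have h3 : (1 - (v - b / (2 * v) - a)) * v = -(v ^ 2 - (a + 1) * v - b / 2) := by
        field_simp
        ring
      nlinarith
  constructor
  · intro hD
    set r : ℝ := (a + 1 + Real.sqrt ((a + 1) ^ 2 + 2 * b)) / 2 with hr
    have hsq : Real.sqrt ((a + 1) ^ 2 + 2 * b) ^ 2 = (a + 1) ^ 2 + 2 * b :=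
      Real.sq_sqrt hD
    have hsnn := Real.sqrt_nonneg ((a + 1) ^ 2 + 2 * b)
    have hle : ∀ v : ℝ, 0 < v → v ^ 2 - (a + 1) * v - b / 2 ≤ 0 → v ≤ r := by
      intro v hv hg
      nlinarith [sq_nonneg (2 * v - (a + 1) + Real.sqrt ((a + 1) ^ 2 + 2 * b))]
    rcases le_or_gt r 0 with h0 | h0
    · rw [max_eq_right h0, ENNReal.ofReal_zero]
      refine le_antisymm ?_ zero_le
      rw [radial]
      refine iSup_le fun v => iSup_le ?_
      rintro ⟨hv, hp⟩
      have := hle v hv ((key v hv).mp hp)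
      linarith
    · rw [max_eq_left h0.le]
      refine le_antisymm ?_ ?_
      · rw [radial]
        refine iSup_le fun v => iSup_le ?_
        rintro ⟨hv, hp⟩
        exact ENNReal.ofReal_le_ofReal (hle v hv ((key v hv).mp hp))
      · have hg : r ^ 2 - (a + 1) * r - b / 2 ≤ 0 := by nlinarith
        exact le_iSup₂ (f := fun (v : ℝ) (_ : 0 < v ∧ persp f (y, v) ≤ 1) =>
          ENNReal.ofReal v) r ⟨h0, (key r h0).mpr hg⟩
  · intro hD
    refine le_antisymm ?_ zero_le
    rw [radial]
    refine iSup_le fun v => iSup_le ?_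
    rintro ⟨hv, hp⟩
    have hg := (key v hv).mp hp
    exfalso
    nlinarith [sq_nonneg (2 * v - (a + 1))]
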